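/- For every p ∈ (1,∞) there exist δ > 0 and a constant C(p) > 0 such that for every weight w on ℝ with doubling constant D_w ≤ 2+δ and for every λ ∈ ℂ with Im λ > 0, one has ∫_ℝ (Im λ)^{p−1}/|x−λ|^p · w(x) dx ≤ C(p) · (1/|I_λ|) ∫_{I_λ} w(x) dx, where I_λ := [Re λ − Im λ, Re λ + Im λ]. -/

import Mathlib

open MeasureTheory Set

/-- A weight on `ℝ`: measurable, locally integrable, a.e. positive. -/
def IsWeight (w : ℝ → ℝ) : Prop :=
  Measurable w ∧ MeasureTheory.LocallyIntegrable w ∧ ∀ᵐ x ∂(volume : Measure ℝ), 0 < w x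

/-- The doubling constant of `w` is at most `D`: for every bounded interval `I`,
`w(2I) ≤ D · w(I)`, where `2I` has the same center and twice the length. -/
def DoublingLE (w : ℝ → ℝ) (D : ℝ) : Prop :=
  ∀ a b : ℝ, a < b →
    (∫ x in Set.Ico (a - (b - a) / 2) (b + (b - a) / 2), w x) ≤ D * ∫ x in Set.Ico a b, w x

theorem statement18 (p : ℝ) (hp : 1 < p) :
    ∃ δ C : ℝ, 0 < δ ∧ 0 < C ∧
      ∀ w : ℝ → ℝ, IsWeight w → DoublingLE w (2 + δ) →
        ∀ l : ℂ, 0 < l.im →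
          (∫⁻ x : ℝ, ENNReal.ofReal
              (l.im ^ (p - 1) / ‖(x : ℂ) - l‖ ^ p * w x)) ≤
            ENNReal.ofReal (C * ((2 * l.im)⁻¹ *
              ∫ x in Set.Ico (l.re - l.im) (l.re + l.im), w x)) := by
  have h2p : (2:ℝ) < 2 ^ p := by
    nth_rewrite 1 [← Real.rpow_one 2]
    exact (Real.rpow_lt_rpow_left_iff one_lt_two).mpr hp
  have h2ppos : (0:ℝ) < 2 ^ p := lt_trans two_pos h2p
  set δ : ℝ := (2 ^ p - 2) / 2 with hδdef
  have hδpos : 0 < δ := by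
    rw [hδdef]; exact div_pos (by linarith) two_pos
  set r : ℝ := (2 + δ) / 2 ^ p with hrdef
  have hr0 : 0 < r := by rw [hrdef]; positivity
  have hr1 : r < 1 := by
    rw [hrdef, div_lt_one h2ppos, hδdef]; linarith
  refine ⟨δ, 2 ^ (p + 1) * (1 - r)⁻¹, hδpos, mul_pos (Real.rpow_pos_of_pos two_pos _) (inv_pos.mpr (by linarith)), ?_⟩
  intro w hw hD l hl
  obtain ⟨hwm, hwli, hwpos⟩ := hw
  set y : ℝ := l.im with hydef
  set c : ℝ := l.re with hcdef
  have hy : 0 < y := hl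
  set I : ℕ → Set ℝ := fun n => Ico (c - 2 ^ n * y) (c + 2 ^ n * y) with hIdef
  have hImeas : ∀ n, MeasurableSet (I n) := fun n => measurableSet_Ico
  have hImono : Monotone I := by
    apply monotone_nat_of_le_succ
    intro n
    have h1 : (0:ℝ) < 2 ^ n := pow_pos two_pos n
    apply Ico_subset_Ico
    · rw [pow_succ]; nlinarith
    · rw [pow_succ]; nlinarith
  -- the weight of the dyadic intervals
  set W : ℕ → ℝ := fun n => ∫ x in I n, w x with hWdef
  have hInt : ∀ n, IntegrableOn w (I n) := fun n =>
    (hwli.integrableOn_isCompact isCompact_Icc).mono_set Ico_subset_Icc_self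
  have hWnonneg : ∀ n, 0 ≤ W n := fun n =>
    integral_nonneg_of_ae (ae_restrict_of_ae (hwpos.mono fun x hx => hx.le))
  have hWdoub : ∀ n, W (n + 1) ≤ (2 + δ) * W n := by
    intro n
    have h1 : (0:ℝ) < 2 ^ n := pow_pos two_pos n
    have hab : c - 2 ^ n * y < c + 2 ^ n * y := by nlinarith
    have := hD (c - 2 ^ n * y) (c + 2 ^ n * y) hab
    have e1 : c - 2 ^ n * y - (c + 2 ^ n * y - (c - 2 ^ n * y)) / 2 = c - 2 ^ (n+1) * y := by
      rw [pow_succ]; ring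
    have e2 : c + 2 ^ n * y + (c + 2 ^ n * y - (c - 2 ^ n * y)) / 2 = c + 2 ^ (n+1) * y := by
      rw [pow_succ]; ring
    rw [e1, e2] at this
    exact this
  have hWgeom : ∀ n, W n ≤ (2 + δ) ^ n * W 0 := by
    intro n
    induction n with
    | zero => simp
    | succ n ih =>
      calc W (n + 1) ≤ (2 + δ) * W n := hWdoub n
        _ ≤ (2 + δ) * ((2 + δ) ^ n * W 0) := by
            apply mul_le_mul_of_nonneg_left ih (by linarith)
        _ = (2 + δ) ^ (n + 1) * W 0 := by ring
  have hlinW : ∀ n, ∫⁻ x in I n, ENNReal.ofReal (w x) = ENNReal.ofReal (W n) := by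
    intro n
    exact (MeasureTheory.ofReal_integral_eq_lintegral_ofReal (hInt n)
      (ae_restrict_of_ae (hwpos.mono fun x hx => hx.le))).symm
  -- constants
  set K : ℕ → ℝ := fun n => 2 ^ p * y⁻¹ * (((2:ℝ) ^ p)⁻¹) ^ n with hKdef
  have hKnonneg : ∀ n, 0 ≤ K n := by
    intro n; rw [hKdef]; positivity
  -- pointwise bound on the annuli
  have hpt : ∀ n, ∀ x ∈ disjointed I n,
      y ^ (p - 1) / ‖(x : ℂ) - l‖ ^ p ≤ K n := by
    intro n x hx
    have habs0 : y ≤ ‖(x : ℂ) - l‖ := by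
      have := Complex.abs_im_le_norm ((x : ℂ) - l)
      simp only [Complex.sub_im, Complex.ofReal_im, zero_sub, abs_neg] at this
      calc y = |l.im| := (abs_of_pos hl).symm
        _ ≤ _ := this
    have habspos : 0 < ‖(x : ℂ) - l‖ := lt_of_lt_of_le hy habs0
    have hyp1 : y ^ (p - 1) = y ^ p * y⁻¹ := by
      rw [Real.rpow_sub hy, Real.rpow_one, div_eq_mul_inv]
    match n with
    | 0 =>
      have hb : y ^ p ≤ ‖(x : ℂ) - l‖ ^ p :=
        Real.rpow_le_rpow hy.le habs0 (by linarith)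
      have hKval : K 0 = 2 ^ p * y⁻¹ := by simp [hKdef]
      rw [hKval]
      calc y ^ (p - 1) / ‖(x : ℂ) - l‖ ^ p
          ≤ y ^ (p - 1) / y ^ p := by
            apply div_le_div_of_nonneg_left (Real.rpow_nonneg hy.le _) (Real.rpow_pos_of_pos hy p) hb
        _ = y⁻¹ := by
            rw [hyp1]; field_simp
        _ ≤ 2 ^ p * y⁻¹ := by
            nlinarith [inv_pos.mpr hy]
    | (m + 1) =>
      rw [hImono.disjointed_add_one] at hx
      obtain ⟨hx1, hx2⟩ := hx
      have h2m : (0:ℝ) < 2 ^ m := pow_pos two_pos m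
      have hmy : (0:ℝ) < 2 ^ m * y := mul_pos h2m hy
      have hdist : 2 ^ m * y ≤ |x - c| := by
        rw [hIdef] at hx2
        simp only [mem_Ico, not_and, not_lt] at hx2
        rcases lt_or_ge x (c - 2 ^ m * y) with h | h
        · rw [abs_of_nonpos (by linarith)]; linarith
        · rw [abs_of_nonneg (by linarith [hx2 h])]; linarith [hx2 h]
      have habs : 2 ^ m * y ≤ ‖(x : ℂ) - l‖ := by
        have := Complex.abs_re_le_norm ((x : ℂ) - l)
        simp only [Complex.sub_re, Complex.ofReal_re] at this
        exact le_trans hdist this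
      have hb : ((2:ℝ) ^ m * y) ^ p ≤ ‖(x : ℂ) - l‖ ^ p :=
        Real.rpow_le_rpow (by positivity) habs (by linarith)
      have hpow : ((2:ℝ) ^ m) ^ p = ((2:ℝ) ^ p) ^ m := by
        rw [← Real.rpow_natCast 2 m, ← Real.rpow_natCast ((2:ℝ) ^ p) m,
          ← Real.rpow_mul (by norm_num), ← Real.rpow_mul (by norm_num), mul_comm]
      calc y ^ (p - 1) / ‖(x : ℂ) - l‖ ^ p
          ≤ y ^ (p - 1) / ((2:ℝ) ^ m * y) ^ p := by
            apply div_le_div_of_nonneg_left (Real.rpow_nonneg hy.le _)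
              (Real.rpow_pos_of_pos (by positivity) p) hb
        _ = K (m + 1) := by
            rw [Real.mul_rpow (by positivity) hy.le, hyp1, hpow, hKdef]
            have h2pne : ((2:ℝ) ^ p) ≠ 0 := ne_of_gt h2ppos
            have h2pmne : (((2:ℝ) ^ p) ^ m) ≠ 0 := pow_ne_zero _ h2pne
            field_simp
            rw [one_div, inv_pow, pow_succ, mul_comm ((2:ℝ) ^ p) (((2:ℝ) ^ p) ^ m),
              mul_inv_cancel₀ (mul_ne_zero h2pmne h2pne)]
  -- the union of the intervals is everything
  have hU : ⋃ n, I n = univ := by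
    ext x
    simp only [mem_iUnion, mem_univ, iff_true]
    obtain ⟨n, hn⟩ := pow_unbounded_of_one_lt (|x - c| / y) (one_lt_two (α := ℝ))
    refine ⟨n, ?_, ?_⟩
    · have := (div_lt_iff₀ hy).mp hn
      cases abs_cases (x - c) with
      | inl h => linarith [h.1]
      | inr h => linarith [h.1]
    · have := (div_lt_iff₀ hy).mp hn
      cases abs_cases (x - c) with
      | inl h => linarith [h.1]
      | inr h => linarith [h.1]
  -- per-annulus bound
  have hterm : ∀ n, (∫⁻ x in disjointed I n, ENNReal.ofReal
      (y ^ (p - 1) / ‖(x : ℂ) - l‖ ^ p * w x)) ≤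
      ENNReal.ofReal (2 ^ p * y⁻¹ * W 0) * (ENNReal.ofReal r) ^ n := by
    intro n
    have hmeasA : MeasurableSet (disjointed I n) := MeasurableSet.disjointed hImeas n
    calc (∫⁻ x in disjointed I n, ENNReal.ofReal
          (y ^ (p - 1) / ‖(x : ℂ) - l‖ ^ p * w x))
        ≤ ∫⁻ x in disjointed I n, ENNReal.ofReal (K n * w x) := by
          apply lintegral_mono_ae
          filter_upwards [ae_restrict_mem hmeasA, ae_restrict_of_ae hwpos] with x hx hwx
          exact ENNReal.ofReal_le_ofReal
            (mul_le_mul_of_nonneg_right (hpt n x hx) hwx.le)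
      _ = ENNReal.ofReal (K n) * ∫⁻ x in disjointed I n, ENNReal.ofReal (w x) := by
          simp_rw [ENNReal.ofReal_mul (hKnonneg n)]
          exact lintegral_const_mul' _ _ ENNReal.ofReal_ne_top
      _ ≤ ENNReal.ofReal (K n) * ∫⁻ x in I n, ENNReal.ofReal (w x) := by
          gcongr
          exact disjointed_subset I n
      _ = ENNReal.ofReal (K n) * ENNReal.ofReal (W n) := by rw [hlinW n]
      _ = ENNReal.ofReal (K n * W n) := (ENNReal.ofReal_mul (hKnonneg n)).symm
      _ ≤ ENNReal.ofReal (K n * ((2 + δ) ^ n * W 0)) := by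
          apply ENNReal.ofReal_le_ofReal
          exact mul_le_mul_of_nonneg_left (hWgeom n) (hKnonneg n)
      _ = ENNReal.ofReal (2 ^ p * y⁻¹ * W 0) * (ENNReal.ofReal r) ^ n := by
          rw [← ENNReal.ofReal_pow hr0.le,
            ← ENNReal.ofReal_mul (mul_nonneg (by positivity) (hWnonneg 0))]
          congr 1
          rw [hKdef, hrdef]
          rw [div_pow, div_eq_mul_inv, ← inv_pow]
          ring
  -- put it together
  have hW0 : (∫ x in Ico (c - y) (c + y), w x) = W 0 := by
    simp [hWdef, hIdef]
  rw [hW0]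
  calc (∫⁻ x : ℝ, ENNReal.ofReal (y ^ (p - 1) / ‖(x : ℂ) - l‖ ^ p * w x))
      = ∫⁻ x in ⋃ n, disjointed I n, ENNReal.ofReal
          (y ^ (p - 1) / ‖(x : ℂ) - l‖ ^ p * w x) := by
        rw [iUnion_disjointed, hU, Measure.restrict_univ]
    _ = ∑' n, ∫⁻ x in disjointed I n, ENNReal.ofReal
          (y ^ (p - 1) / ‖(x : ℂ) - l‖ ^ p * w x) :=
        lintegral_iUnion (MeasurableSet.disjointed hImeas) (disjoint_disjointed I) _
    _ ≤ ∑' n, ENNReal.ofReal (2 ^ p * y⁻¹ * W 0) * (ENNReal.ofReal r) ^ n :=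
        ENNReal.tsum_le_tsum hterm
    _ = ENNReal.ofReal (2 ^ p * y⁻¹ * W 0) * (1 - ENNReal.ofReal r)⁻¹ := by
        rw [ENNReal.tsum_mul_left, ENNReal.tsum_geometric]
    _ ≤ ENNReal.ofReal (2 ^ (p + 1) * (1 - r)⁻¹ * ((2 * y)⁻¹ * W 0)) := by
        have h1mr : (1:ENNReal) - ENNReal.ofReal r = ENNReal.ofReal (1 - r) := by
          rw [← ENNReal.ofReal_one, ← ENNReal.ofReal_sub _ hr0.le]
        rw [h1mr, ← ENNReal.ofReal_inv_of_pos (by linarith),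
          ← ENNReal.ofReal_mul (mul_nonneg (by positivity) (hWnonneg 0))]
        apply ENNReal.ofReal_le_ofReal
        have h2p1 : (2:ℝ) ^ (p + 1) = 2 ^ p * 2 := by
          rw [Real.rpow_add two_pos, Real.rpow_one]
        rw [h2p1, mul_inv]
        apply le_of_eq
        ring
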